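/- Let F be a field, k ≥ 2, and let D(λ) = Σ_{i=0}^{k} D_i φ_i(λ) with D_i ∈ F^{m×m} and D_k ≠ 0. Let H ∈ F^{km×(k−1)m} be such that the pencil L(λ) := [e_k⊗I_m, H]·F_Φ^D(λ) is block-symmetric (i.e., L ∈ DM(D) with ansatz vector e_k, the last canonical vector of F^k). Then the constant matrix [e_k⊗I_m, H] ∈ F^{km×km} is nonsingular if and only if the leading coefficient D_k is nonsingular. -/
import Mathlib


open Matrix

/-- The column vector `Φ_k(λ) ⊗ I_m` as a `km × m` polynomial matrix. -/
noncomputable def phiKron {F : Type*} [Field F] (φ : ℕ → Polynomial F) (k m : ℕ) :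
    Matrix (Fin k × Fin m) (Fin m) (Polynomial F) :=
  Matrix.of fun p j => if p.2 = j then φ (k - 1 - (p.1 : ℕ)) else 0

/-- The pencil `M_Φ(λ) ∈ F[λ]^{(k-1)×k}`. -/
noncomputable def MPhiMat {F : Type*} [Field F] (α β γ : ℕ → F) (k : ℕ) :
    Matrix (Fin (k - 1)) (Fin k) (Polynomial F) :=
  Matrix.of fun i j =>
    if (j : ℕ) = (i : ℕ) then -Polynomial.C (α (k - 2 - (i : ℕ)))
    else if (j : ℕ) = (i : ℕ) + 1 then Polynomial.X - Polynomial.C (β (k - 2 - (i : ℕ)))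
    else if (j : ℕ) = (i : ℕ) + 2 then -Polynomial.C (γ (k - 2 - (i : ℕ)))
    else 0

/-- The block row `m_Φ^P(λ) ∈ F[λ]^{m×km}`. -/
noncomputable def mPhiMat {F : Type*} [Field F] (α β γ : ℕ → F) (k m : ℕ)
    (P : ℕ → Matrix (Fin m) (Fin m) F) :
    Matrix (Fin m) (Fin k × Fin m) (Polynomial F) :=
  Matrix.of fun r c =>
    if (c.1 : ℕ) = 0 then
      Polynomial.C ((α (k - 1))⁻¹) * (Polynomial.X - Polynomial.C (β (k - 1)))
          * Polynomial.C (P k r c.2)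
        + Polynomial.C (P (k - 1) r c.2)
    else if (c.1 : ℕ) = 1 then
      Polynomial.C (P (k - 2) r c.2)
        - Polynomial.C ((α (k - 1))⁻¹ * γ (k - 1)) * Polynomial.C (P k r c.2)
    else Polynomial.C (P (k - 1 - (c.1 : ℕ)) r c.2)

/-- The pencil `F_Φ^P(λ) = [m_Φ^P(λ); M_Φ(λ) ⊗ I_m] ∈ F[λ]^{km×km}`. -/
noncomputable def FPhiMat {F : Type*} [Field F] (α β γ : ℕ → F) (k m : ℕ)
    (P : ℕ → Matrix (Fin m) (Fin m) F) :
    Matrix (Fin k × Fin m) (Fin k × Fin m) (Polynomial F) :=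
  Matrix.of fun p q =>
    if h : (p.1 : ℕ) = 0 then mPhiMat α β γ k m P p.2 q
    else
      MPhiMat α β γ k ⟨(p.1 : ℕ) - 1, by have := p.1.isLt; omega⟩ q.1
        * (if p.2 = q.2 then 1 else 0)

/-- The constant `km × km` matrix `[v ⊗ I_m, H]`: column block `0` is `v ⊗ I_m`, column
blocks `1, …, k-1` are the `(k-1)m` columns of `H`. -/
def concatKron {F : Type*} [Field F] (k m : ℕ) (v : Fin k → F)
    (H : Matrix (Fin k × Fin m) (Fin (k - 1) × Fin m) F) :
    Matrix (Fin k × Fin m) (Fin k × Fin m) F :=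
  Matrix.of fun p q =>
    if h : (q.1 : ℕ) = 0 then (if p.2 = q.2 then v p.1 else 0)
    else H p (⟨(q.1 : ℕ) - 1, by have := q.1.isLt; omega⟩, q.2)

section
def aH {F : Type*} [Field F] {m n : ℕ}
    (H : Matrix (Fin (n+2) × Fin m) (Fin (n+1) × Fin m) F) (i l : ℕ) (r s : Fin m) : F :=
  if h : i < n+2 ∧ 1 ≤ l ∧ l < n+2 then H (⟨i, h.1⟩, r) (⟨l-1, by omega⟩, s) else 0

variable {F : Type*} [Field F] {m n : ℕ} (α β γ : ℕ → F)
  (D : ℕ → Matrix (Fin m) (Fin m) F)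
  (H : Matrix (Fin (n+2) × Fin m) (Fin (n+1) × Fin m) F)

lemma Lentry (i j : Fin (n+2)) (r s : Fin m) :
    ((concatKron (n+2) m (fun i : Fin (n+2) => if (i:ℕ) = n+1 then 1 else 0) H).map
        Polynomial.C * FPhiMat α β γ (n+2) m D) (i,r) (j,s)
    = (if (i:ℕ) = n+1 then mPhiMat α β γ (n+2) m D r (j,s) else 0)
      + ∑ l : Fin (n+1), Polynomial.C (H (i,r) (l,s)) * MPhiMat α β γ (n+2) l j := by
  rw [Matrix.mul_apply]
  rw [Fintype.sum_prod_type]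
  rw [Fin.sum_univ_succ]
  congr 1
  · have h0 : ∀ t : Fin m, (FPhiMat α β γ (n+2) m D) ((0 : Fin (n+2)), t) (j, s)
        = mPhiMat α β γ (n+2) m D t (j,s) := fun t => by
      simp [FPhiMat]
    have h1 : ∀ t : Fin m, (concatKron (n+2) m
        (fun i : Fin (n+2) => if (i:ℕ) = n+1 then 1 else 0) H) (i,r) ((0: Fin (n+2)),t)
        = if r = t then (if (i:ℕ) = n+1 then (1:F) else 0) else 0 := fun t => by
      simp [concatKron]
    simp only [Matrix.map_apply, h0, h1]
    rw [Finset.sum_congr rfl (fun t _ => by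
      rw [apply_ite Polynomial.C, apply_ite Polynomial.C, Polynomial.C_0, ite_mul, zero_mul])]
    rw [Finset.sum_ite_eq]
    simp
  · refine Finset.sum_congr rfl fun l _ => ?_
    have h0 : ∀ t : Fin m, (FPhiMat α β γ (n+2) m D) (l.succ, t) (j, s)
        = MPhiMat α β γ (n+2) l j * (if t = s then 1 else 0) := fun t => by
      have : ((⟨(l.succ : ℕ) - 1, by omega⟩ : Fin (n+2-1))) = l := by
        ext; simp
      rw [FPhiMat]
      simp only [Matrix.of_apply]
      rw [dif_neg (by simp [Fin.val_succ])]
      rw [this]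
    have h1 : ∀ t : Fin m, (concatKron (n+2) m
        (fun i : Fin (n+2) => if (i:ℕ) = n+1 then 1 else 0) H) (i,r) (l.succ,t)
        = H (i,r) (l,t) := fun t => by
      have : ((⟨(l.succ : ℕ) - 1, by omega⟩ : Fin (n+2-1))) = l := by
        ext; simp
      rw [concatKron]
      simp only [Matrix.of_apply]
      rw [dif_neg (by simp [Fin.val_succ])]
      rw [this]
    simp only [Matrix.map_apply, h0, h1, mul_ite, mul_one, mul_zero]
    simp


lemma coeff1_M (l : Fin (n+1)) (j : Fin (n+2)) :
    (MPhiMat α β γ (n+2) l j).coeff 1 = if (j:ℕ) = (l:ℕ)+1 then 1 else 0 := by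
  rw [MPhiMat]
  simp only [Matrix.of_apply]
  split_ifs with h1 h2 h3 <;>
    simp_all [Polynomial.coeff_sub]

lemma coeff0_M (l : Fin (n+1)) (j : Fin (n+2)) :
    (MPhiMat α β γ (n+2) l j).coeff 0 =
      if (j:ℕ) = (l:ℕ) then -α (n-(l:ℕ))
      else if (j:ℕ) = (l:ℕ)+1 then -β (n-(l:ℕ))
      else if (j:ℕ) = (l:ℕ)+2 then -γ (n-(l:ℕ)) else 0 := by
  have hl : n + 2 - 2 - (l:ℕ) = n - (l:ℕ) := by omega
  rw [MPhiMat]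
  simp only [Matrix.of_apply, hl]
  split_ifs <;> simp [Polynomial.coeff_sub]

lemma coeff1_m (r s : Fin m) (j : Fin (n+2)) :
    (mPhiMat α β γ (n+2) m D r (j,s)).coeff 1
      = if (j:ℕ) = 0 then (α (n+1))⁻¹ * D (n+2) r s else 0 := by
  rw [mPhiMat]
  simp only [Matrix.of_apply]
  have : n + 2 - 1 = n + 1 := by omega
  rw [this]
  split_ifs <;>
    simp [Polynomial.coeff_sub, Polynomial.coeff_C_mul, Polynomial.coeff_mul_C,
      Polynomial.coeff_C, Polynomial.coeff_X]

lemma coeff1_sum (i j : Fin (n+2)) (r s : Fin m) :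
    (∑ l : Fin (n+1), Polynomial.C (H (i,r) (l,s)) * MPhiMat α β γ (n+2) l j).coeff 1
      = aH H (i:ℕ) (j:ℕ) r s := by
  rw [Polynomial.finset_sum_coeff]
  simp only [Polynomial.coeff_C_mul, coeff1_M, mul_ite, mul_one, mul_zero]
  by_cases hj : (j:ℕ) = 0
  · rw [Finset.sum_eq_zero (fun l _ => by rw [if_neg (by omega)])]
    rw [aH, dif_neg (by omega)]
  · have hj1 : (j:ℕ) - 1 < n + 1 := by omega
    rw [Finset.sum_eq_single (⟨(j:ℕ)-1, hj1⟩ : Fin (n+1))]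
    · rw [if_pos (by simp; omega), aH, dif_pos (by omega)]
    · intro l _ hl
      rw [if_neg (fun hc => hl (by ext; simp; omega))]
    · intro h; exact absurd (Finset.mem_univ _) h

lemma coeff0_sum (i j : Fin (n+2)) (r s : Fin m) :
    (∑ l : Fin (n+1), Polynomial.C (H (i,r) (l,s)) * MPhiMat α β γ (n+2) l j).coeff 0
      = -(if (j:ℕ) ≤ n then α (n-(j:ℕ)) * aH H (i:ℕ) ((j:ℕ)+1) r s else 0)
        - β (n+1-(j:ℕ)) * aH H (i:ℕ) (j:ℕ) r s
        - γ (n+2-(j:ℕ)) * aH H (i:ℕ) ((j:ℕ)-1) r s := by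
  rw [Polynomial.finset_sum_coeff]
  simp only [Polynomial.coeff_C_mul, coeff0_M]
  have split : ∀ l : Fin (n+1),
      H (i,r) (l,s) * (if (j:ℕ) = (l:ℕ) then -α (n-(l:ℕ))
        else if (j:ℕ) = (l:ℕ)+1 then -β (n-(l:ℕ))
        else if (j:ℕ) = (l:ℕ)+2 then -γ (n-(l:ℕ)) else 0)
      = (if (j:ℕ) = (l:ℕ) then -(α (n-(j:ℕ)) * H (i,r) (l,s)) else 0)
        + (if (j:ℕ) = (l:ℕ)+1 then -(β (n+1-(j:ℕ)) * H (i,r) (l,s)) else 0)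
        + (if (j:ℕ) = (l:ℕ)+2 then -(γ (n+2-(j:ℕ)) * H (i,r) (l,s)) else 0) := by
    intro l
    by_cases h1 : (j:ℕ) = (l:ℕ)
    · simp only [if_pos h1, if_neg (show (j:ℕ) ≠ (l:ℕ)+1 by omega),
        if_neg (show (j:ℕ) ≠ (l:ℕ)+2 by omega),
        show n - (l:ℕ) = n - (j:ℕ) by omega]
      ring
    · by_cases h2 : (j:ℕ) = (l:ℕ)+1
      · simp only [if_neg h1, if_pos h2, if_neg (show (j:ℕ) ≠ (l:ℕ)+2 by omega),
          show n - (l:ℕ) = n + 1 - (j:ℕ) by omega]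
        ring
      · by_cases h3 : (j:ℕ) = (l:ℕ)+2
        · simp only [if_neg h1, if_neg h2, if_pos h3,
            show n - (l:ℕ) = n + 2 - (j:ℕ) by omega]
          ring
        · simp [h1, h2, h3]
  rw [Finset.sum_congr rfl (fun l _ => split l), Finset.sum_add_distrib, Finset.sum_add_distrib]
  have e1 : (∑ l : Fin (n+1), if (j:ℕ) = (l:ℕ) then -(α (n-(j:ℕ)) * H (i,r) (l,s)) else 0)
      = -(if (j:ℕ) ≤ n then α (n-(j:ℕ)) * aH H (i:ℕ) ((j:ℕ)+1) r s else 0) := by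
    by_cases hj : (j:ℕ) ≤ n
    · rw [Finset.sum_eq_single (⟨(j:ℕ), by omega⟩ : Fin (n+1))]
      · rw [if_pos (by simp), if_pos hj, aH, dif_pos (by omega)]
        rfl
      · intro l _ hl
        rw [if_neg (fun hc => hl (by ext; simpa using hc.symm))]
      · intro h; exact absurd (Finset.mem_univ _) h
    · rw [Finset.sum_eq_zero (fun l _ => by have := l.isLt; rw [if_neg (by omega)]),
        if_neg hj, neg_zero]
  have e2 : (∑ l : Fin (n+1), if (j:ℕ) = (l:ℕ)+1 then -(β (n+1-(j:ℕ)) * H (i,r) (l,s)) else 0)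
      = -(β (n+1-(j:ℕ)) * aH H (i:ℕ) (j:ℕ) r s) := by
    by_cases hj : 1 ≤ (j:ℕ)
    · rw [Finset.sum_eq_single (⟨(j:ℕ)-1, by omega⟩ : Fin (n+1))]
      · rw [if_pos (by simp; omega), aH, dif_pos (by omega)]
      · intro l _ hl
        rw [if_neg (fun hc => hl (by ext; simp; omega))]
      · intro h; exact absurd (Finset.mem_univ _) h
    · rw [Finset.sum_eq_zero (fun l _ => by rw [if_neg (by omega)]), aH, dif_neg (by omega)]
      ring
  have e3 : (∑ l : Fin (n+1), if (j:ℕ) = (l:ℕ)+2 then -(γ (n+2-(j:ℕ)) * H (i,r) (l,s)) else 0)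
      = -(γ (n+2-(j:ℕ)) * aH H (i:ℕ) ((j:ℕ)-1) r s) := by
    by_cases hj : 2 ≤ (j:ℕ)
    · rw [Finset.sum_eq_single (⟨(j:ℕ)-2, by omega⟩ : Fin (n+1))]
      · rw [if_pos (by simp; omega), aH, dif_pos (by omega)]
        rfl
      · intro l _ hl
        rw [if_neg (fun hc => hl (by ext; simp; omega))]
      · intro h; exact absurd (Finset.mem_univ _) h
    · rw [Finset.sum_eq_zero (fun l _ => by rw [if_neg (by omega)]), aH, dif_neg (by omega)]
      ring
  rw [e1, e2, e3]
  ring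


variable {Dt : Matrix (Fin m) (Fin m) F}

def cfun (α : ℕ → F) (n : ℕ) : ℕ → F
  | 0 => (α (n+1))⁻¹
  | (i+1) => α i * (α (n-i))⁻¹ * cfun α n i

lemma cfun_ne_zero (hα : ∀ j, α j ≠ 0) (n : ℕ) : ∀ i, cfun α n i ≠ 0
  | 0 => inv_ne_zero (hα _)
  | (i+1) => mul_ne_zero (mul_ne_zero (hα _) (inv_ne_zero (hα _))) (cfun_ne_zero hα n i)

section struct
variable (hα : ∀ j, α j ≠ 0) (Dt : Matrix (Fin m) (Fin m) F)
  (a : ℕ → ℕ → Fin m → Fin m → F)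
  (ha0 : ∀ i r s, a i 0 r s = 0)
  (S1 : ∀ i j, 1 ≤ i → 1 ≤ j → i < n+2 → j < n+2 → ∀ r s : Fin m, a i j r s = a j i r s)
  (Row0 : ∀ j, 1 ≤ j → j < n+2 → ∀ r s : Fin m,
    a 0 j r s = if j = n+1 then (α (n+1))⁻¹ * Dt r s else 0)
  (S0 : ∀ i j, i ≤ n → j ≤ n → ∀ r s : Fin m,
    -(if j ≤ n then α (n-j) * a i (j+1) r s else 0) - β (n+1-j) * a i j r s
        - γ (n+2-j) * a i (j-1) r s
    = -(if i ≤ n then α (n-i) * a j (i+1) r s else 0) - β (n+1-i) * a j i r s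
        - γ (n+2-i) * a j (i-1) r s)

include hα ha0 S1 Row0 S0

lemma Zlemma : ∀ i j : ℕ, ∀ r s : Fin m, 1 ≤ j → i + j ≤ n → a i j r s = 0 := by
  intro i
  induction i using Nat.strong_induction_on with
  | _ i ih =>
    match i with
    | 0 =>
      intro j r s hj hjn
      rw [Row0 j hj (by omega), if_neg (by omega)]
    | (t+1) =>
      intro j r s hj hjn
      have hS := S0 t j (by omega) (by omega) r s
      have h1 : a t (j+1) r s = 0 := ih t (by omega) _ _ _ (by omega) (by omega)
      have h2 : a t j r s = 0 := ih t (by omega) _ _ _ hj (by omega)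
      have h3 : a t (j-1) r s = 0 := by
        rcases Nat.eq_or_lt_of_le hj with h | h
        · rw [show j - 1 = 0 by omega]; exact ha0 _ _ _
        · exact ih t (by omega) _ _ _ (by omega) (by omega)
      have h4 : a j t r s = 0 := by
        match t with
        | 0 => exact ha0 _ _ _
        | (u+1) =>
          rw [S1 j (u+1) hj (by omega) (by omega) (by omega)]
          exact ih (u+1) (by omega) _ _ _ hj (by omega)
      have h5 : a j (t-1) r s = 0 := by
        match t with
        | 0 => rw [show (0:ℕ) - 1 = 0 by omega]; exact ha0 _ _ _
        | 1 => exact ha0 _ _ _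
        | (u+2) =>
          show a j (u+1) r s = 0
          rw [S1 j (u+1) hj (by omega) (by omega) (by omega)]
          exact ih (u+1) (by omega) _ _ _ hj (by omega)
      rw [h1, h2, h3, if_pos (by omega : j ≤ n)] at hS
      rw [if_pos (by omega : t ≤ n), h4, h5] at hS
      have h' : α (n - t) * a j (t+1) r s = 0 := by linear_combination hS
      have h6 : a j (t+1) r s = 0 := by
        rcases mul_eq_zero.mp h' with h | h
        · exact absurd h (hα _)
        · exact h
      rw [S1 (t+1) j (by omega) hj (by omega) (by omega)]
      exact h6

lemma ADlemma : ∀ i : ℕ, i ≤ n → ∀ r s : Fin m, a i (n+1-i) r s = cfun α n i * Dt r s := by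
  intro i
  induction i with
  | zero =>
    intro _ r s
    rw [show n+1-0 = n+1 by omega, Row0 (n+1) (by omega) (by omega), if_pos rfl]
    rfl
  | succ t ih =>
    intro hi r s
    have hZ := Zlemma (α := α) (β := β) (γ := γ) hα Dt a ha0 S1 Row0 S0
    have hS := S0 t (n-t) (by omega) (by omega) r s
    have e1 : a t (n-t+1) r s = cfun α n t * Dt r s := by
      rw [show n-t+1 = n+1-t by omega]
      exact ih (by omega) r s
    have e2 : a t (n-t) r s = 0 := hZ _ _ _ _ (by omega) (by omega)
    have e3 : a t (n-t-1) r s = 0 := by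
      rcases Nat.eq_zero_or_pos (n-t-1) with h | h
      · rw [h]; exact ha0 _ _ _
      · exact hZ _ _ _ _ (by omega) (by omega)
    have e4 : a (n-t) t r s = 0 := by
      match t, hi with
      | 0, _ => exact ha0 _ _ _
      | (u+1), hi =>
        rw [S1 (n-(u+1)) (u+1) (by omega) (by omega) (by omega) (by omega)]
        exact hZ _ _ _ _ (by omega) (by omega)
    have e5 : a (n-t) (t-1) r s = 0 := by
      match t, hi with
      | 0, _ => rw [show (0:ℕ)-1 = 0 by omega]; exact ha0 _ _ _
      | 1, _ => exact ha0 _ _ _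
      | (u+2), hi =>
        show a (n-(u+2)) (u+1) r s = 0
        rw [S1 (n-(u+2)) (u+1) (by omega) (by omega) (by omega) (by omega)]
        exact hZ _ _ _ _ (by omega) (by omega)
    rw [if_pos (by omega : n - t ≤ n), if_pos (by omega : t ≤ n),
      show n - (n-t) = t by omega, e1, e2, e3, e4, e5] at hS
    have h' : α (n-t) * a (n-t) (t+1) r s = α t * (cfun α n t * Dt r s) := by
      linear_combination hS
    have e6 : a (n-t) (t+1) r s = (α (n-t))⁻¹ * (α t * (cfun α n t * Dt r s)) :=
      (eq_inv_mul_iff_mul_eq₀ (hα _)).mpr h'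
    rw [show n+1-(t+1) = n-t by omega,
      S1 (t+1) (n-t) (by omega) (by omega) (by omega) (by omega), e6, cfun]
    ring

end struct

lemma det_aux (hα : ∀ j, α j ≠ 0) (Dt : Matrix (Fin m) (Fin m) F)
    (A : Matrix (Fin (n+2) × Fin m) (Fin (n+2) × Fin m) F)
    (hzero : ∀ p q : Fin (n+2) × Fin m, (p.1:ℕ) + (q.1:ℕ) < n+1 → A p q = 0)
    (hdiag : ∀ (w : Fin (n+2)), (w:ℕ) ≤ n → ∀ r s,
      A (w, r) (w.rev, s) = cfun α n (w:ℕ) * Dt r s)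
    (hlast : ∀ r s : Fin m, A (⟨n+1, by omega⟩, r) (⟨0, by omega⟩, s) = if r = s then 1 else 0) :
    IsUnit A.det ↔ IsUnit Dt.det := by
  classical
  set σ : Equiv.Perm (Fin (n+2) × Fin m) :=
    (Fin.revPerm : Equiv.Perm (Fin (n+2))).prodCongr (Equiv.refl (Fin m)) with hσ
  set B : Matrix (Fin (n+2) × Fin m) (Fin (n+2) × Fin m) F := A.submatrix id σ with hB
  have hdetB : B.det = Equiv.Perm.sign σ * A.det := Matrix.det_permute' σ A
  have hBT : Matrix.BlockTriangular B (fun p => p.1.rev) := by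
    intro p q h
    have h1 : (p.1:ℕ) < (q.1:ℕ) := Fin.rev_lt_rev.mp h
    have h2 : ((σ q).1 : ℕ) = n + 1 - (q.1:ℕ) := by
      simp [hσ, Fin.val_rev]
    have h3 := q.1.isLt
    show A (id p) (σ q) = 0
    exact hzero _ _ (by rw [id_eq, h2]; omega)
  have hblock : ∀ v : Fin (n+2),
      (B.toSquareBlock (fun p => p.1.rev) v).det
        = (Matrix.of fun r s : Fin m => A (v.rev, r) (v, s)).det := by
    intro v
    let e : Fin m ≃ {p : Fin (n+2) × Fin m // p.1.rev = v} :=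
      { toFun := fun t => ⟨(v.rev, t), by simp⟩
        invFun := fun p => p.1.2
        left_inv := fun t => rfl
        right_inv := fun p => by
          obtain ⟨⟨p1, p2⟩, hp⟩ := p
          have hp1 : v.rev = p1 := by rw [← hp, Fin.rev_rev]
          exact Subtype.ext (Prod.ext (by simp [hp1.symm]) rfl) }
    rw [← Matrix.det_submatrix_equiv_self e]
    congr 1
    ext r s
    have hσv : σ (v.rev, s) = (v, s) := by simp [hσ]
    show A (id (v.rev, r)) (σ (v.rev, s)) = A (v.rev, r) (v, s)
    rw [hσv, id_eq]
  have hprod : B.det = ∏ v : Fin (n+2), (Matrix.of fun r s : Fin m => A (v.rev, r) (v, s)).det := by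
    rw [hBT.det_fintype]
    exact Finset.prod_congr rfl fun v _ => hblock v
  have hprod2 : B.det = ∏ w : Fin (n+2), (Matrix.of fun r s : Fin m => A (w, r) (w.rev, s)).det := by
    rw [hprod, ← Equiv.prod_comp (Fin.revPerm : Equiv.Perm (Fin (n+2)))
      (fun v => (Matrix.of fun r s : Fin m => A (v.rev, r) (v, s)).det)]
    exact Finset.prod_congr rfl fun w _ => by rw [Fin.revPerm_apply, Fin.rev_rev]
  have hval : B.det = (∏ w : Fin (n+1), (cfun α n (w:ℕ))^m) * Dt.det^(n+1) := by
    rw [hprod2, Fin.prod_univ_castSucc]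
    have hlast' : (Matrix.of fun r s : Fin m =>
        A ((Fin.last (n+1)), r) ((Fin.last (n+1)).rev, s)).det = 1 := by
      have : (Matrix.of fun r s : Fin m =>
          A ((Fin.last (n+1)), r) ((Fin.last (n+1)).rev, s)) = (1 : Matrix (Fin m) (Fin m) F) := by
        ext r s
        have h2 : (Fin.last (n+1)).rev = (⟨0, by omega⟩ : Fin (n+2)) := by
          ext; simp [Fin.val_rev]
        rw [Matrix.of_apply, h2,
          show (Fin.last (n+1)) = (⟨n+1, by omega⟩ : Fin (n+2)) from rfl,
          hlast r s, Matrix.one_apply]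
      rw [this, Matrix.det_one]
    rw [hlast']
    rw [mul_one]
    have hmid : ∀ w : Fin (n+1), (Matrix.of fun r s : Fin m =>
        A (w.castSucc, r) ((w.castSucc).rev, s)).det = (cfun α n (w:ℕ))^m * Dt.det := by
      intro w
      have : (Matrix.of fun r s : Fin m => A (w.castSucc, r) ((w.castSucc).rev, s))
          = cfun α n (w:ℕ) • Dt := by
        ext r s
        rw [Matrix.of_apply, hdiag w.castSucc (by simp [Fin.is_le]) r s]
        simp [Fin.coe_castSucc]
      rw [this, Matrix.det_smul, Fintype.card_fin]
    rw [Finset.prod_congr rfl fun w _ => hmid w, Finset.prod_mul_distrib, Finset.prod_const,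
      Finset.card_univ, Fintype.card_fin]
  have hu : (∏ w : Fin (n+1), (cfun α n (w:ℕ))^m) ≠ 0 :=
    Finset.prod_ne_zero_iff.mpr fun w _ => pow_ne_zero _ (cfun_ne_zero α hα n _)
  have hsign : ((Equiv.Perm.sign σ : ℤ) : F) ≠ 0 := by
    rcases Int.units_eq_one_or (Equiv.Perm.sign σ) with h | h <;> simp [h]
  rw [isUnit_iff_ne_zero, isUnit_iff_ne_zero]
  constructor
  · intro hA
    have : B.det ≠ 0 := by
      rw [hdetB]
      exact mul_ne_zero hsign hA
    rw [hval] at this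
    intro hD
    exact this (by rw [hD, zero_pow (by omega), mul_zero])
  · intro hD
    have hBne : B.det ≠ 0 := by
      rw [hval]
      exact mul_ne_zero hu (pow_ne_zero _ hD)
    intro hA
    rw [hdetB, hA, mul_zero] at hBne
    exact hBne rfl

lemma Lcoeff1 (i j : Fin (n+2)) (r s : Fin m) :
    ((if (i:ℕ) = n+1 then mPhiMat α β γ (n+2) m D r (j,s) else 0)
        + ∑ l : Fin (n+1), Polynomial.C (H (i,r) (l,s)) * MPhiMat α β γ (n+2) l j).coeff 1
    = (if (i:ℕ) = n+1 ∧ (j:ℕ) = 0 then (α (n+1))⁻¹ * D (n+2) r s else 0)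
      + aH H (i:ℕ) (j:ℕ) r s := by
  rw [Polynomial.coeff_add, coeff1_sum, apply_ite (fun p : Polynomial F => p.coeff 1),
    Polynomial.coeff_zero, coeff1_m, ite_and]

lemma Lcoeff0 (i j : Fin (n+2)) (r s : Fin m) (hi : (i:ℕ) ≠ n+1) :
    ((if (i:ℕ) = n+1 then mPhiMat α β γ (n+2) m D r (j,s) else 0)
        + ∑ l : Fin (n+1), Polynomial.C (H (i,r) (l,s)) * MPhiMat α β γ (n+2) l j).coeff 0
    = -(if (j:ℕ) ≤ n then α (n-(j:ℕ)) * aH H (i:ℕ) ((j:ℕ)+1) r s else 0)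
      - β (n+1-(j:ℕ)) * aH H (i:ℕ) (j:ℕ) r s
      - γ (n+2-(j:ℕ)) * aH H (i:ℕ) ((j:ℕ)-1) r s := by
  rw [Polynomial.coeff_add, coeff0_sum, if_neg hi, Polynomial.coeff_zero, zero_add]
end

/-- For `D(λ) = Σ_{i=0}^{k} D_i φ_i(λ)` of degree `k ≥ 2`, if the pencil
`L(λ) = [e_k ⊗ I_m, H] F_Φ^D(λ)` is block-symmetric (that is, `L ∈ 𝔻𝕄(D)` with ansatz
vector `e_k`), then `[e_k ⊗ I_m, H]` is nonsingular iff the leading coefficient `D_k` is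
nonsingular. -/
theorem concat_nonsingular_iff_leadingCoeff_nonsingular
    {F : Type*} [Field F] {m k : ℕ} (hk : 2 ≤ k)
    (α β γ : ℕ → F) (hα : ∀ j, α j ≠ 0)
    (φ : ℕ → Polynomial F) (hφ0 : φ 0 = 1)
    (hrec : ∀ j : ℕ, Polynomial.C (α j) * φ (j + 1)
      = (Polynomial.X - Polynomial.C (β j)) * φ j
        - Polynomial.C (γ j) * (if j = 0 then 0 else φ (j - 1)))
    (D : ℕ → Matrix (Fin m) (Fin m) F) (hDk : D k ≠ 0)
    (H : Matrix (Fin k × Fin m) (Fin (k - 1) × Fin m) F)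
    (ek : Fin k → F) (hek : ek = fun i : Fin k => if (i : ℕ) = k - 1 then 1 else 0)
    (L : Matrix (Fin k × Fin m) (Fin k × Fin m) (Polynomial F))
    (hL : L = (concatKron k m ek H).map Polynomial.C * FPhiMat α β γ k m D)
    (hblocksym : ∀ (i j : Fin k) (r s : Fin m), L (i, r) (j, s) = L (j, r) (i, s)) :
    IsUnit (concatKron k m ek H).det ↔ IsUnit (D k).det := by
  classical
  subst hL
  obtain ⟨n, rfl⟩ : ∃ n, k = n + 2 := ⟨k - 2, by omega⟩
  have hek2 : ek = fun i : Fin (n+2) => if (i:ℕ) = n+1 then (1:F) else 0 := hek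
  rw [hek2] at hblocksym ⊢
  -- coefficient-1 symmetry
  have key1 : ∀ (i j : Fin (n+2)) (r s : Fin m),
      (if (i:ℕ) = n+1 ∧ (j:ℕ) = 0 then (α (n+1))⁻¹ * D (n+2) r s else 0)
        + aH H (i:ℕ) (j:ℕ) r s
      = (if (j:ℕ) = n+1 ∧ (i:ℕ) = 0 then (α (n+1))⁻¹ * D (n+2) r s else 0)
        + aH H (j:ℕ) (i:ℕ) r s := by
    intro i j r s
    have h := congrArg (fun p : Polynomial F => p.coeff 1) (hblocksym i j r s)
    simp only [Lentry] at h
    rwa [Lcoeff1, Lcoeff1] at h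
  -- coefficient-0 symmetry
  have key0 : ∀ (i j : Fin (n+2)) (r s : Fin m), (i:ℕ) ≠ n+1 → (j:ℕ) ≠ n+1 →
      -(if (j:ℕ) ≤ n then α (n-(j:ℕ)) * aH H (i:ℕ) ((j:ℕ)+1) r s else 0)
        - β (n+1-(j:ℕ)) * aH H (i:ℕ) (j:ℕ) r s
        - γ (n+2-(j:ℕ)) * aH H (i:ℕ) ((j:ℕ)-1) r s
      = -(if (i:ℕ) ≤ n then α (n-(i:ℕ)) * aH H (j:ℕ) ((i:ℕ)+1) r s else 0)
        - β (n+1-(i:ℕ)) * aH H (j:ℕ) (i:ℕ) r s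
        - γ (n+2-(i:ℕ)) * aH H (j:ℕ) ((i:ℕ)-1) r s := by
    intro i j r s hi hj
    have h := congrArg (fun p : Polynomial F => p.coeff 0) (hblocksym i j r s)
    simp only [Lentry] at h
    rwa [Lcoeff0 (hi := hi), Lcoeff0 (hi := hj)] at h
  have ha0 : ∀ (i : ℕ) (r s : Fin m), aH H i 0 r s = 0 := fun i r s => by
    rw [aH, dif_neg (by omega)]
  have hS1 : ∀ i j, 1 ≤ i → 1 ≤ j → i < n+2 → j < n+2 → ∀ r s : Fin m,
      aH H i j r s = aH H j i r s := by
    intro i j hi hj hi2 hj2 r s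
    have h := key1 ⟨i, hi2⟩ ⟨j, hj2⟩ r s
    rwa [if_neg (by simp; omega), if_neg (by simp; omega), zero_add, zero_add] at h
  have hRow0 : ∀ j, 1 ≤ j → j < n+2 → ∀ r s : Fin m,
      aH H 0 j r s = if j = n+1 then (α (n+1))⁻¹ * D (n+2) r s else 0 := by
    intro j hj hj2 r s
    have h2 : (if j = n+1 ∧ (0:ℕ) = 0 then (α (n+1))⁻¹ * D (n+2) r s else 0) + aH H j 0 r s
        = (if (0:ℕ) = n+1 ∧ j = 0 then (α (n+1))⁻¹ * D (n+2) r s else 0) + aH H 0 j r s :=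
      key1 ⟨j, hj2⟩ ⟨0, by omega⟩ r s
    rw [ha0, add_zero, if_neg (show ¬((0:ℕ) = n+1 ∧ j = 0) by omega), zero_add] at h2
    rw [← h2]
    by_cases hj3 : j = n+1 <;> simp [hj3]
  have hS0 : ∀ i j, i ≤ n → j ≤ n → ∀ r s : Fin m,
      -(if j ≤ n then α (n-j) * aH H i (j+1) r s else 0) - β (n+1-j) * aH H i j r s
          - γ (n+2-j) * aH H i (j-1) r s
      = -(if i ≤ n then α (n-i) * aH H j (i+1) r s else 0) - β (n+1-i) * aH H j i r s
          - γ (n+2-i) * aH H j (i-1) r s := by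
    intro i j hi hj r s
    exact key0 ⟨i, by omega⟩ ⟨j, by omega⟩ r s (by simp; omega) (by simp; omega)
  have hZ := Zlemma (n := n) (α := α) (β := β) (γ := γ) hα (D (n+2))
    (fun i j r s => aH H i j r s) ha0 hS1 hRow0 hS0
  have hAD := ADlemma (n := n) (α := α) (β := β) (γ := γ) hα (D (n+2))
    (fun i j r s => aH H i j r s) ha0 hS1 hRow0 hS0
  apply det_aux (n := n) α hα (D (n+2))
  · -- hzero
    rintro ⟨pi, pr⟩ ⟨qi, qr⟩ hlt
    simp only at hlt
    by_cases hq : (qi:ℕ) = 0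
    · rw [concatKron]
      simp only [Matrix.of_apply, dif_pos hq]
      rw [show (if (pi:ℕ) = n+1 then (1:F) else 0) = 0 from if_neg (by omega)]
      simp
    · have hA : concatKron (n+2) m (fun i : Fin (n+2) => if (i:ℕ) = n+1 then (1:F) else 0) H
          (pi,pr) (qi,qr) = aH H (pi:ℕ) (qi:ℕ) pr qr := by
        rw [concatKron, aH]
        simp only [Matrix.of_apply, dif_neg hq]
        rw [dif_pos ⟨pi.isLt, by omega, qi.isLt⟩]
      rw [hA]
      exact hZ _ _ _ _ (by omega) (by omega)
  · -- hdiag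
    intro w hw r s
    have hrev : ((w.rev : Fin (n+2)) : ℕ) = n+1 - (w:ℕ) := by
      simp [Fin.val_rev]
    have hA : concatKron (n+2) m (fun i : Fin (n+2) => if (i:ℕ) = n+1 then (1:F) else 0) H
        (w,r) (w.rev,s) = aH H (w:ℕ) ((w.rev : Fin (n+2)) : ℕ) r s := by
      rw [concatKron, aH]
      simp only [Matrix.of_apply]
      rw [dif_neg (by omega), dif_pos ⟨w.isLt, by omega, (w.rev).isLt⟩]
    rw [hA, hrev, show n+1-(w:ℕ) = n+1-(w:ℕ) from rfl]
    exact hAD (w:ℕ) hw r s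
  · -- hlast
    intro r s
    rw [concatKron]
    simp only [Matrix.of_apply, dif_pos rfl]
    simp
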